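/- Let ℋ be the set of holomorphic functions f on the upper half-plane ℂ₊ satisfying Im f(z) ≥ 0 and |f(z)| ≤ 1/Im(z) for all z ∈ ℂ₊. Suppose (f_i)_{i∈V} and (g_i)_{i∈V} in ℋ^V both satisfy, on a locally finite rooted tree T=(V,E), the recursion f_i(z) = −(z + Σ_{j∈D(i)} f_j(z))^{-1} for every vertex i, where D(i) is the set of children of i. If the number of vertices at depth n from the root grows at most exponentially in n (limsup |∂(T)_n|^{1/n} < ∞), then f_i = g_i for all i ∈ V. -/

import Mathlib

open Filter
set_option maxHeartbeats 1000000

/-- The class `ℋ` of holomorphic functions on the upper half-plane `ℂ₊` with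
`Im f(z) ≥ 0` and `|f(z)| ≤ 1/Im z`. -/
def IsH (f : ℂ → ℂ) : Prop :=
  DifferentiableOn ℂ f {z : ℂ | 0 < z.im} ∧
    ∀ z : ℂ, 0 < z.im → 0 ≤ (f z).im ∧ ‖f z‖ ≤ (z.im)⁻¹

/-- The set of depth-`n` descendants of a vertex. -/
noncomputable def desc {V : Type*} (children : V → Finset V) : ℕ → V → Finset V
  | 0, i => {i}
  | n+1, i =>
      haveI := Classical.decEq V
      (children i).biUnion (fun j => desc children n j)

lemma desc_inj {V : Type*} (children : V → Finset V)
    (hinj : ∀ i i' j, j ∈ children i → j ∈ children i' → i = i') :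
    ∀ n (j j' k : V), k ∈ desc children n j → k ∈ desc children n j' → j = j' := by
  intro n
  induction n with
  | zero =>
      intro j j' k hk hk'
      simp [desc] at hk hk'
      rw [← hk, hk']
  | succ n ih =>
      intro j j' k hk hk'
      classical
      simp only [desc, Finset.mem_biUnion] at hk hk'
      obtain ⟨c, hc, hkc⟩ := hk
      obtain ⟨c', hc', hkc'⟩ := hk'
      have hcc : c = c' := ih c c' k hkc hkc'
      subst hcc
      exact hinj j j' c hc hc'

lemma desc_depth {V : Type*} (children : V → Finset V) (depth : V → ℕ)
    (hdepth : ∀ i j, j ∈ children i → depth j = depth i + 1) :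
    ∀ n (i k : V), k ∈ desc children n i → depth k = depth i + n := by
  intro n
  induction n with
  | zero => intro i k hk; simp [desc] at hk; simp [hk]
  | succ n ih =>
      intro i k hk
      classical
      simp only [desc, Finset.mem_biUnion] at hk
      obtain ⟨c, hc, hkc⟩ := hk
      have := ih c k hkc
      rw [this, hdepth i c hc]
      ring

/-- On a locally finite rooted tree whose generation sizes grow at most
exponentially, the system of resolvent recursions `f_i(z) = −(z + Σ_{j∈D(i)} f_j(z))⁻¹`
has at most one solution in `ℋ^V`. -/
theorem resolvent_recursion_unique {V : Type*} (root : V) (children : V → Finset V)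
    (depth : V → ℕ)
    (hroot : depth root = 0)
    (hdepth : ∀ i j, j ∈ children i → depth j = depth i + 1)
    (hinj : ∀ i i' j, j ∈ children i → j ∈ children i' → i = i')
    (hfin : ∀ n, {v : V | depth v = n}.Finite)
    (hexp : ∃ C : ℝ, ∀ n, (((hfin n).toFinset.card : ℝ)) ≤ C ^ n)
    (f g : V → ℂ → ℂ) (hf : ∀ i, IsH (f i)) (hg : ∀ i, IsH (g i))
    (hfrec : ∀ (i : V) (z : ℂ), 0 < z.im → f i z = -(z + ∑ j ∈ children i, f j z)⁻¹)
    (hgrec : ∀ (i : V) (z : ℂ), 0 < z.im → g i z = -(z + ∑ j ∈ children i, g j z)⁻¹) :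
    ∀ (i : V) (z : ℂ), 0 < z.im → f i z = g i z := by
  classical
  obtain ⟨C, hC⟩ := hexp
  have hC0 : 0 ≤ C := by
    have h1 := hC 1
    have : (0 : ℝ) ≤ ((hfin 1).toFinset.card : ℝ) := by positivity
    simpa using this.trans h1
  set D : ℝ := max C 1 with hD
  have hD1 : (1 : ℝ) ≤ D := le_max_right _ _
  have hD0 : (0 : ℝ) < D := lt_of_lt_of_le one_pos hD1
  have hCD : ∀ n, (((hfin n).toFinset.card : ℝ)) ≤ D ^ n := fun n =>
    (hC n).trans (pow_le_pow_left₀ hC0 (le_max_left _ _) n)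
  -- agreement for Im z large
  have key : ∀ z : ℂ, D < z.im → ∀ i, f i z = g i z := by
    intro z hz i
    set y : ℝ := z.im with hy
    have hy1 : (1 : ℝ) < y := lt_of_le_of_lt hD1 hz
    have hy0 : 0 < y := lt_trans one_pos hy1
    -- one-step contraction
    have step : ∀ i : V, ‖f i z - g i z‖ ≤
        (∑ j ∈ children i, ‖f j z - g j z‖) * y⁻¹ * y⁻¹ := by
      intro i
      set a : ℂ := z + ∑ j ∈ children i, f j z with hA
      set b : ℂ := z + ∑ j ∈ children i, g j z with hB
      have hima : y ≤ a.im := by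
        have : 0 ≤ (∑ j ∈ children i, f j z).im := by
          rw [Complex.im_sum]
          exact Finset.sum_nonneg fun j _ => ((hf j).2 z hy0).1
        simp only [hA, Complex.add_im]
        linarith
      have himb : y ≤ b.im := by
        have : 0 ≤ (∑ j ∈ children i, g j z).im := by
          rw [Complex.im_sum]
          exact Finset.sum_nonneg fun j _ => ((hg j).2 z hy0).1
        simp only [hB, Complex.add_im]
        linarith
      have hna : y ≤ ‖a‖ := hima.trans ((le_abs_self _).trans
        (by exact Complex.abs_im_le_norm a))
      have hnb : y ≤ ‖b‖ := himb.trans ((le_abs_self _).trans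
        (by exact Complex.abs_im_le_norm b))
      have hane : a ≠ 0 := by
        intro h; rw [h] at hima; simp at hima; linarith
      have hbne : b ≠ 0 := by
        intro h; rw [h] at himb; simp at himb; linarith
      have heq : f i z - g i z = (∑ j ∈ children i, (f j z - g j z)) * a⁻¹ * b⁻¹ := by
        rw [hfrec i z hy0, hgrec i z hy0, Finset.sum_sub_distrib]
        rw [show (∑ j ∈ children i, f j z) = a - z by rw [hA]; ring,
            show (∑ j ∈ children i, g j z) = b - z by rw [hB]; ring]
        field_simp
        ring_nf
        rw [mul_inv_cancel_right₀ hbne, mul_right_comm, mul_inv_cancel₀ hane]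
        ring
      rw [heq]
      have h1 : ‖(∑ j ∈ children i, (f j z - g j z)) * a⁻¹ * b⁻¹‖ =
          ‖∑ j ∈ children i, (f j z - g j z)‖ * ‖a‖⁻¹ * ‖b‖⁻¹ := by
        simp [norm_mul]
      rw [h1]
      have hs : ‖∑ j ∈ children i, (f j z - g j z)‖ ≤ ∑ j ∈ children i, ‖f j z - g j z‖ :=
        norm_sum_le _ _
      have hainv : ‖a‖⁻¹ ≤ y⁻¹ := inv_anti₀ hy0 hna
      have hbinv : ‖b‖⁻¹ ≤ y⁻¹ := inv_anti₀ hy0 hnb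
      have hsnn : (0:ℝ) ≤ ∑ j ∈ children i, ‖f j z - g j z‖ :=
        Finset.sum_nonneg fun j _ => norm_nonneg _
      exact mul_le_mul (mul_le_mul hs hainv (inv_nonneg.mpr (norm_nonneg a)) hsnn) hbinv
        (inv_nonneg.mpr (norm_nonneg b)) (mul_nonneg hsnn (inv_nonneg.mpr hy0.le))
    -- iterate
    have iter : ∀ n (i : V), ‖f i z - g i z‖ ≤
        (y⁻¹) ^ (2 * n) * ∑ j ∈ desc children n i, ‖f j z - g j z‖ := by
      intro n
      induction n with
      | zero => intro i; simp [desc]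
      | succ n ih =>
          intro i
          have hdisj : (↑(children i) : Set V).PairwiseDisjoint
              (fun j => desc children n j) := by
            intro j hj j' hj' hne
            exact Finset.disjoint_left.mpr fun k hk hk' =>
              hne (desc_inj children hinj n j j' k hk hk')
          calc ‖f i z - g i z‖
              ≤ (∑ j ∈ children i, ‖f j z - g j z‖) * y⁻¹ * y⁻¹ := step i
            _ ≤ (∑ j ∈ children i, (y⁻¹) ^ (2 * n) *
                  ∑ k ∈ desc children n j, ‖f k z - g k z‖) * y⁻¹ * y⁻¹ := by
                gcongr with j hj
                exact ih j
            _ = (y⁻¹) ^ (2 * (n + 1)) *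
                  ∑ j ∈ children i, ∑ k ∈ desc children n j, ‖f k z - g k z‖ := by
                rw [← Finset.mul_sum]
                ring
            _ = (y⁻¹) ^ (2 * (n + 1)) *
                  ∑ k ∈ desc children (n + 1) i, ‖f k z - g k z‖ := by
                rw [show desc children (n+1) i =
                    (children i).biUnion (fun j => desc children n j) from rfl]
                rw [Finset.sum_biUnion hdisj]
    -- cardinality and final bound
    have hbound : ∀ n : ℕ, ‖f i z - g i z‖ ≤
        (D * (y⁻¹ * y⁻¹)) ^ n * (D ^ depth i * (2 * y⁻¹)) := by
      intro n
      have hsub : desc children n i ⊆ (hfin (depth i + n)).toFinset := by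
        intro k hk
        rw [Set.Finite.mem_toFinset]
        exact desc_depth children depth hdepth n i k hk
      have hcard : ((desc children n i).card : ℝ) ≤ D ^ (depth i + n) := by
        have := Finset.card_le_card hsub
        calc ((desc children n i).card : ℝ) ≤ ((hfin (depth i + n)).toFinset.card : ℝ) := by
              exact_mod_cast this
          _ ≤ D ^ (depth i + n) := hCD _
      have hsum : ∑ k ∈ desc children n i, ‖f k z - g k z‖ ≤
          ((desc children n i).card : ℝ) * (2 * y⁻¹) := by
        have := Finset.sum_le_card_nsmul (desc children n i)
          (fun k => ‖f k z - g k z‖) (2 * y⁻¹) (fun k _ => by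
            calc ‖f k z - g k z‖ ≤ ‖f k z‖ + ‖g k z‖ := norm_sub_le _ _
              _ ≤ y⁻¹ + y⁻¹ := add_le_add ((hf k).2 z hy0).2 ((hg k).2 z hy0).2
              _ = 2 * y⁻¹ := by ring)
        simpa [nsmul_eq_mul] using this
      calc ‖f i z - g i z‖
          ≤ (y⁻¹) ^ (2 * n) * ∑ j ∈ desc children n i, ‖f j z - g j z‖ := iter n i
        _ ≤ (y⁻¹) ^ (2 * n) * (((desc children n i).card : ℝ) * (2 * y⁻¹)) := by
            gcongr
        _ ≤ (y⁻¹) ^ (2 * n) * (D ^ (depth i + n) * (2 * y⁻¹)) := by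
            gcongr
        _ = (D * (y⁻¹ * y⁻¹)) ^ n * (D ^ depth i * (2 * y⁻¹)) := by
            rw [pow_add]
            ring
    have hr1 : D * (y⁻¹ * y⁻¹) < 1 := by
      rw [show D * (y⁻¹ * y⁻¹) = D / (y * y) by field_simp]
      rw [div_lt_one (by positivity)]
      nlinarith
    have hr0 : 0 ≤ D * (y⁻¹ * y⁻¹) := by positivity
    have htend : Tendsto (fun n : ℕ => (D * (y⁻¹ * y⁻¹)) ^ n * (D ^ depth i * (2 * y⁻¹)))
        atTop (nhds 0) := by
      have := (tendsto_pow_atTop_nhds_zero_of_lt_one hr0 hr1).mul_const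
        (D ^ depth i * (2 * y⁻¹))
      simpa using this
    have : ‖f i z - g i z‖ ≤ 0 := ge_of_tendsto' htend hbound
    have : f i z - g i z = 0 := norm_le_zero_iff.mp this
    exact sub_eq_zero.mp this
  -- extend to all of ℂ₊ by the identity theorem
  intro i z hz0
  have hopen : IsOpen {z : ℂ | 0 < z.im} := isOpen_lt continuous_const Complex.continuous_im
  have hconn : IsPreconnected {z : ℂ | 0 < z.im} :=
    (convex_halfSpace_im_gt 0).isPreconnected
  have hfa : AnalyticOnNhd ℂ (f i) {z : ℂ | 0 < z.im} := (hf i).1.analyticOnNhd hopen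
  have hga : AnalyticOnNhd ℂ (g i) {z : ℂ | 0 < z.im} := (hg i).1.analyticOnNhd hopen
  set z₀ : ℂ := Complex.I * (D + 1) with hz₀def
  have hz₀im : z₀.im = D + 1 := by simp [hz₀def]
  have hz₀ : z₀ ∈ {z : ℂ | 0 < z.im} := by
    simp only [Set.mem_setOf_eq, hz₀im]; linarith
  have hopen2 : IsOpen {z : ℂ | D < z.im} := isOpen_lt continuous_const Complex.continuous_im
  have hev : f i =ᶠ[nhds z₀] g i := by
    apply Filter.eventuallyEq_of_mem (hopen2.mem_nhds (by
      simp only [Set.mem_setOf_eq, hz₀im]; linarith))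
    intro w hw
    exact key w hw i
  exact hfa.eqOn_of_preconnected_of_eventuallyEq hga hconn hz₀ hev hz0
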